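/- arXiv:2510.19759 — 3 statements merged into one kernel-verified Lean document; each statement's English description precedes it below -/
import Mathlib

section
/- Fix an index b with 1 ≤ b ≤ N, and assume q_b ≠ t_m for all m = 1,…,N_t. Then the partial derivative of R with respect to the x-coordinate x_b of q_b exists and equals (4πρ/λ) · Im( Σ_{m=1}^{N_t} [C_2(q)(m,b) − C_1(q)(m,b)] · ((x_b − x_{t,m}) / ‖t_m − q_b‖) · exp(i(2π/λ)‖t_m − q_b‖) ), where x_{t,m} denotes the x-coordinate of t_m and C_j(q)(m,b) is the (m,b) entry of C_j(q). -/
open Matrix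
open scoped ComplexOrder

/-- The near-field channel matrix `H(q) ∈ ℂ^{N×Nt}` with entries
`H(q)_{b,m} = ρ · exp(i (2π/λ) ‖t_m − q_b‖)`. -/
noncomputable def nearFieldH (lam ρ : ℝ) {N Nt : ℕ}
    (t : Fin Nt → EuclideanSpace ℝ (Fin 3))
    (q : Fin N → EuclideanSpace ℝ (Fin 3)) :
    Matrix (Fin N) (Fin Nt) ℂ :=
  Matrix.of fun b m =>
    (ρ : ℂ) * Complex.exp (Complex.I * ((2 * Real.pi / lam * ‖t m - q b‖ : ℝ) : ℂ))

/-- `A(q) = H(q) T H(q)ᴴ + σ² I`. -/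
noncomputable def nearFieldA (lam ρ σ : ℝ) {N Nt : ℕ}
    (T : Matrix (Fin Nt) (Fin Nt) ℂ)
    (t : Fin Nt → EuclideanSpace ℝ (Fin 3))
    (q : Fin N → EuclideanSpace ℝ (Fin 3)) :
    Matrix (Fin N) (Fin N) ℂ :=
  nearFieldH lam ρ t q * T * (nearFieldH lam ρ t q)ᴴ + ((σ ^ 2 : ℝ) : ℂ) • 1

/-- `C(q) = T H(q)ᴴ A(q)⁻¹`. -/
noncomputable def nearFieldC (lam ρ σ : ℝ) {N Nt : ℕ}
    (T : Matrix (Fin Nt) (Fin Nt) ℂ)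
    (t : Fin Nt → EuclideanSpace ℝ (Fin 3))
    (q : Fin N → EuclideanSpace ℝ (Fin 3)) :
    Matrix (Fin Nt) (Fin N) ℂ :=
  T * (nearFieldH lam ρ t q)ᴴ * (nearFieldA lam ρ σ T t q)⁻¹

/-- `R(q) = ln det A₁(q) − ln det A₂(q)` (the determinants are real and positive). -/
noncomputable def nearFieldR (lam ρ σ : ℝ) {N Nt : ℕ}
    (T1 T2 : Matrix (Fin Nt) (Fin Nt) ℂ)
    (t : Fin Nt → EuclideanSpace ℝ (Fin 3))
    (q : Fin N → EuclideanSpace ℝ (Fin 3)) : ℝ :=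
  Real.log ((nearFieldA lam ρ σ T1 t q).det.re)
    - Real.log ((nearFieldA lam ρ σ T2 t q).det.re)

noncomputable def updX (p : EuclideanSpace ℝ (Fin 3)) (x : ℝ) : EuclideanSpace ℝ (Fin 3) :=
  WithLp.toLp 2 (Function.update p 0 x)

lemma aux_norm_hasDerivAt (p v : EuclideanSpace ℝ (Fin 3)) (hpv : ‖v - p‖ ≠ 0) :
    HasDerivAt (fun x : ℝ => ‖v - updX p x‖) ((p 0 - v 0) / ‖v - p‖) (p 0) := by
  have hnorm : ∀ u : EuclideanSpace ℝ (Fin 3), ‖u‖ = Real.sqrt (∑ i, (u i) ^ 2) := by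
    intro u
    rw [EuclideanSpace.norm_eq]
    congr 1
    exact Finset.sum_congr rfl fun i _ => by rw [Real.norm_eq_abs, sq_abs]
  have hupd : updX p (p 0) = p := by simp [updX]
  set g : ℝ → ℝ := fun x => ∑ i : Fin 3, (v i - updX p x i) ^ 2 with hg
  have hg' : HasDerivAt g (2 * (p 0 - v 0)) (p 0) := by
    have : HasDerivAt g (∑ i : Fin 3, if i = 0 then 2 * (p 0 - v 0) else 0) (p 0) := by
      apply HasDerivAt.fun_sum
      intro i _
      by_cases hi : i = 0
      · subst hi
        simp only [if_pos rfl, updX, WithLp.ofLp_toLp, Function.update_self]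
        have := ((hasDerivAt_id (p 0)).const_sub (v 0)).fun_pow 2
        refine this.congr_deriv ?_
        simp only [if_pos trivial, id]
        ring
      · simp only [if_neg hi, updX, WithLp.ofLp_toLp, Function.update_of_ne hi]
        exact hasDerivAt_const _ _
    simpa using this
  have hgx : Real.sqrt (g (p 0)) = ‖v - p‖ := by
    rw [hg]
    simp only [hupd]
    rw [hnorm (v - p)]
    simp [PiLp.sub_apply]
  have hgne : g (p 0) ≠ 0 := by
    intro h0
    rw [h0, Real.sqrt_zero] at hgx
    exact hpv hgx.symm
  have hs : HasDerivAt (fun x => Real.sqrt (g x))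
      (1 / (2 * Real.sqrt (g (p 0))) * (2 * (p 0 - v 0))) (p 0) :=
    (Real.hasDerivAt_sqrt hgne).comp _ hg'
  have heq : ∀ x, ‖v - updX p x‖ = Real.sqrt (g x) := by
    intro x
    rw [hnorm, hg]
    simp [PiLp.sub_apply]
  simp only [heq]
  convert hs using 1
  rw [hgx]
  field_simp

lemma aux_det_hasDerivAt {n : Type*} [Fintype n] [DecidableEq n]
    (M : ℝ → Matrix n n ℂ) (M' : Matrix n n ℂ) (x : ℝ)
    (h : ∀ i j, HasDerivAt (fun y => M y i j) (M' i j) x) :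
    HasDerivAt (fun y => (M y).det) (((M x).adjugate * M').trace) x := by
  have h1 : HasDerivAt (fun y => (M y).det)
      (∑ σ : Equiv.Perm n, ((Equiv.Perm.sign σ : ℤ) : ℂ) *
        ∑ c, (∏ j ∈ Finset.univ.erase c, M x (σ j) j) • M' (σ c) c) x := by
    simp only [Matrix.det_apply']
    exact HasDerivAt.fun_sum fun σ _ =>
      ((HasDerivAt.fun_finsetProd fun i _ => h (σ i) i).const_mul _)
  convert h1 using 1
  have hcol : ∀ c : n, ((M x).adjugate * M') c c
      = ∑ σ : Equiv.Perm n, ((Equiv.Perm.sign σ : ℤ) : ℂ) *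
          ((∏ j ∈ Finset.univ.erase c, M x (σ j) j) * M' (σ c) c) := by
    intro c
    have : ((M x).adjugate * M') c c = ((M x).updateCol c fun r => M' r c).det := by
      rw [← Matrix.cramer_apply, Matrix.cramer_eq_adjugate_mulVec, Matrix.mul_apply,
        Matrix.mulVec]
      rfl
    rw [this, Matrix.det_apply']
    refine Finset.sum_congr rfl fun σ _ => ?_
    congr 1
    rw [← Finset.mul_prod_erase _ _ (Finset.mem_univ c), Matrix.updateCol_self, mul_comm]
    congr 1
    exact Finset.prod_congr rfl fun j hj =>
      Matrix.updateCol_ne (Finset.ne_of_mem_erase hj)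
  rw [Matrix.trace]
  simp only [Matrix.diag, hcol, smul_eq_mul]
  rw [Finset.sum_comm]
  simp [Finset.mul_sum, smul_eq_mul, mul_assoc]

noncomputable def auxHd (lam ρ : ℝ) {N Nt : ℕ}
    (t : Fin Nt → EuclideanSpace ℝ (Fin 3))
    (q : Fin N → EuclideanSpace ℝ (Fin 3)) (b : Fin N) :
    Matrix (Fin N) (Fin Nt) ℂ :=
  Matrix.of fun b' m =>
    if b' = b then
      Complex.I * ((2 * Real.pi / lam : ℝ) : ℂ) *
        (((q b 0 - t m 0) / ‖t m - q b‖ : ℝ) : ℂ) *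
        ((ρ : ℂ) * Complex.exp (Complex.I * ((2 * Real.pi / lam * ‖t m - q b‖ : ℝ) : ℂ)))
    else 0

lemma aux_H_entry_hasDerivAt {N Nt : ℕ} (lam ρ : ℝ)
    (t : Fin Nt → EuclideanSpace ℝ (Fin 3)) (q : Fin N → EuclideanSpace ℝ (Fin 3))
    (b : Fin N) (hq : ∀ m, ‖t m - q b‖ ≠ 0) (b' : Fin N) (m : Fin Nt) :
    HasDerivAt (fun x : ℝ => nearFieldH lam ρ t (Function.update q b (updX (q b) x)) b' m)
      (if b' = b then
        Complex.I * ((2 * Real.pi / lam : ℝ) : ℂ) *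
          (((q b 0 - t m 0) / ‖t m - q b‖ : ℝ) : ℂ) *
          ((ρ : ℂ) * Complex.exp (Complex.I * ((2 * Real.pi / lam * ‖t m - q b‖ : ℝ) : ℂ)))
       else 0) (q b 0) := by
  by_cases hb : b' = b
  · subst hb
    simp only [nearFieldH, Matrix.of_apply, Function.update_self, if_pos rfl]
    have h1 : HasDerivAt (fun x : ℝ => 2 * Real.pi / lam * ‖t m - updX (q b') x‖)
        (2 * Real.pi / lam * ((q b' 0 - t m 0) / ‖t m - q b'‖)) (q b' 0) :=
      (aux_norm_hasDerivAt (q b') (t m) (hq m)).const_mul _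
    have h2 : HasDerivAt
        (fun x : ℝ => ((2 * Real.pi / lam * ‖t m - updX (q b') x‖ : ℝ) : ℂ))
        ((2 * Real.pi / lam * ((q b' 0 - t m 0) / ‖t m - q b'‖) : ℝ) : ℂ) (q b' 0) :=
      Complex.ofRealCLM.hasFDerivAt.comp_hasDerivAt _ h1
    have h3 := ((h2.const_mul Complex.I).cexp).const_mul (ρ : ℂ)
    refine h3.congr_deriv ?_
    have : updX (q b') (q b' 0) = q b' := by simp [updX]
    rw [this]
    push_cast
    ring
  · simp only [nearFieldH, Matrix.of_apply, Function.update_of_ne hb, if_neg hb]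
    exact hasDerivAt_const _ _

lemma aux_qupd_self {N : ℕ} (q : Fin N → EuclideanSpace ℝ (Fin 3)) (b : Fin N) :
    Function.update q b (updX (q b) (q b 0)) = q := by
  rw [show updX (q b) (q b 0) = q b by simp [updX]]
  exact Function.update_eq_self _ _

lemma aux_conj_hasDerivAt {f : ℝ → ℂ} {f' : ℂ} {x : ℝ} (hf : HasDerivAt f f' x) :
    HasDerivAt (fun y => (starRingEnd ℂ) (f y)) ((starRingEnd ℂ) f') x := by
  have := (Complex.conjCLE.toContinuousLinearMap.hasFDerivAt (x := f x)).comp_hasDerivAt x hf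
  exact this

lemma aux_A_entry_hasDerivAt {N Nt : ℕ} (lam ρ σ : ℝ)
    (T : Matrix (Fin Nt) (Fin Nt) ℂ)
    (t : Fin Nt → EuclideanSpace ℝ (Fin 3)) (q : Fin N → EuclideanSpace ℝ (Fin 3))
    (b : Fin N) (hq : ∀ m, ‖t m - q b‖ ≠ 0) (b1 b2 : Fin N) :
    HasDerivAt (fun x : ℝ =>
        nearFieldA lam ρ σ T t (Function.update q b (updX (q b) x)) b1 b2)
      ((auxHd lam ρ t q b * T * (nearFieldH lam ρ t q)ᴴ
        + nearFieldH lam ρ t q * T * (auxHd lam ρ t q b)ᴴ) b1 b2) (q b 0) := by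
  have hp := aux_qupd_self q b
  have hH := aux_H_entry_hasDerivAt lam ρ t q b hq
  simp only [nearFieldA, Matrix.add_apply, Matrix.smul_apply, Matrix.mul_apply,
    Matrix.conjTranspose_apply, Matrix.one_apply]
  have hsum : HasDerivAt (fun x : ℝ =>
      ∑ j, (∑ k, nearFieldH lam ρ t (Function.update q b (updX (q b) x)) b1 k * T k j) *
        star (nearFieldH lam ρ t (Function.update q b (updX (q b) x)) b2 j))
      (∑ j, ((∑ k, auxHd lam ρ t q b b1 k * T k j) * star (nearFieldH lam ρ t q b2 j)
        + (∑ k, nearFieldH lam ρ t q b1 k * T k j) * star (auxHd lam ρ t q b b2 j)))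
      (q b 0) := by
    apply HasDerivAt.fun_sum
    intro j _
    have hf : HasDerivAt (fun x : ℝ =>
        ∑ k, nearFieldH lam ρ t (Function.update q b (updX (q b) x)) b1 k * T k j)
        (∑ k, auxHd lam ρ t q b b1 k * T k j) (q b 0) :=
      HasDerivAt.fun_sum fun k _ => (hH b1 k).mul_const (T k j)
    have hg : HasDerivAt (fun x : ℝ =>
        star (nearFieldH lam ρ t (Function.update q b (updX (q b) x)) b2 j))
        (star (auxHd lam ρ t q b b2 j)) (q b 0) := aux_conj_hasDerivAt (hH b2 j)
    have := hf.mul hg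
    rw [hp] at this
    exact this
  have := hsum.add_const (((σ ^ 2 : ℝ) : ℂ) • if b1 = b2 then (1:ℂ) else 0)
  refine this.congr_deriv ?_
  rw [← Finset.sum_add_distrib]

lemma aux_A_posDef {N Nt : ℕ} (lam ρ σ : ℝ) (hσ : 0 < σ ^ 2)
    (T : Matrix (Fin Nt) (Fin Nt) ℂ) (hTpsd : T.PosSemidef)
    (t : Fin Nt → EuclideanSpace ℝ (Fin 3)) (q : Fin N → EuclideanSpace ℝ (Fin 3)) :
    (nearFieldA lam ρ σ T t q).PosDef := by
  refine Matrix.PosDef.posSemidef_add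
    (Matrix.PosSemidef.mul_mul_conjTranspose_same hTpsd (nearFieldH lam ρ t q)) ?_
  rw [Matrix.smul_one_eq_diagonal]
  refine Matrix.posDef_diagonal_iff.mpr fun i => ?_
  exact_mod_cast hσ

lemma aux_logdet_hasDerivAt {N Nt : ℕ} (lam ρ σ : ℝ) (hσ : 0 < σ ^ 2)
    (T : Matrix (Fin Nt) (Fin Nt) ℂ) (hT : T.IsHermitian) (hTpsd : T.PosSemidef)
    (t : Fin Nt → EuclideanSpace ℝ (Fin 3)) (q : Fin N → EuclideanSpace ℝ (Fin 3))
    (b : Fin N) (hq : ∀ m, ‖t m - q b‖ ≠ 0) :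
    HasDerivAt (fun x : ℝ =>
        Real.log ((nearFieldA lam ρ σ T t (Function.update q b (updX (q b) x))).det.re))
      (2 * (∑ m, nearFieldC lam ρ σ T t q m b * auxHd lam ρ t q b b m).re) (q b 0) := by
  set H0 := nearFieldH lam ρ t q with hH0
  set Hd := auxHd lam ρ t q b with hHd
  set A0 := nearFieldA lam ρ σ T t q with hA0
  set A' : Matrix (Fin N) (Fin N) ℂ := Hd * T * H0ᴴ + H0 * T * Hdᴴ with hA'
  have hp := aux_qupd_self q b
  -- determinant derivative
  have hdet : HasDerivAt
      (fun x : ℝ => (nearFieldA lam ρ σ T t (Function.update q b (updX (q b) x))).det)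
      ((A0.adjugate * A').trace) (q b 0) := by
    have := aux_det_hasDerivAt
      (fun x : ℝ => nearFieldA lam ρ σ T t (Function.update q b (updX (q b) x))) A'
      (q b 0) (fun i j => aux_A_entry_hasDerivAt lam ρ σ T t q b hq i j)
    simpa only [hp] using this
  have hre : HasDerivAt
      (fun x : ℝ => (nearFieldA lam ρ σ T t (Function.update q b (updX (q b) x))).det.re)
      (((A0.adjugate * A').trace).re) (q b 0) :=
    Complex.reCLM.hasFDerivAt.comp_hasDerivAt _ hdet
  -- positivity
  have hPD : A0.PosDef := aux_A_posDef lam ρ σ hσ T hTpsd t q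
  have hdetpos : 0 < A0.det := hPD.det_pos
  have hdet_re_pos : 0 < A0.det.re := by
    rw [Complex.lt_def] at hdetpos
    exact hdetpos.1
  have hdet_im : A0.det.im = 0 := by
    rw [Complex.lt_def] at hdetpos
    exact hdetpos.2.symm
  have hne : (nearFieldA lam ρ σ T t
      (Function.update q b (updX (q b) (q b 0)))).det.re ≠ 0 := by
    rw [hp]
    exact ne_of_gt hdet_re_pos
  have hlog := hre.log hne
  rw [hp] at hlog
  convert hlog using 1
  -- now the trace algebra
  have hAinv : A0⁻¹.IsHermitian := hPD.isHermitian.inv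
  have hdetc : A0.det = ((A0.det.re : ℝ) : ℂ) := by
    exact Complex.ext (by simp) (by simp [hdet_im])
  -- trace (A0⁻¹ * A') = det⁻¹ * trace (adj * A')
  have htr_inv : (A0⁻¹ * A').trace = (A0.det)⁻¹ * ((A0.adjugate * A').trace) := by
    rw [Matrix.inv_def, Matrix.smul_mul, Matrix.trace_smul, smul_eq_mul, Ring.inverse_eq_inv']
  -- first term of the trace
  have hz1 : (A0⁻¹ * (Hd * T * H0ᴴ)).trace = ∑ m, nearFieldC lam ρ σ T t q m b * Hd b m := by
    have h1 : (A0⁻¹ * (Hd * T * H0ᴴ)).trace = ((T * H0ᴴ * A0⁻¹) * Hd).trace := by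
      rw [Matrix.trace_mul_comm A0⁻¹ (Hd * T * H0ᴴ),
        Matrix.trace_mul_comm (T * H0ᴴ * A0⁻¹) Hd]
      simp only [Matrix.mul_assoc]
    rw [h1, Matrix.trace]
    simp only [Matrix.diag, Matrix.mul_apply, nearFieldC, ← hH0, ← hA0]
    refine Finset.sum_congr rfl fun m _ => ?_
    rw [Finset.sum_eq_single b]
    · intro b' _ hb'
      have : Hd b' m = 0 := by simp [hHd, auxHd, hb']
      rw [this, mul_zero]
    · intro h; exact absurd (Finset.mem_univ b) h
  have hz2 : (A0⁻¹ * (H0 * T * Hdᴴ)).trace = star ((A0⁻¹ * (Hd * T * H0ᴴ)).trace) := by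
    have : (A0⁻¹ * (H0 * T * Hdᴴ)) = ((Hd * T * H0ᴴ) * A0⁻¹)ᴴ := by
      rw [Matrix.conjTranspose_mul, Matrix.conjTranspose_mul, Matrix.conjTranspose_mul,
        Matrix.conjTranspose_conjTranspose, hAinv.eq, hT.eq]
      simp only [Matrix.mul_assoc]
    rw [this, Matrix.trace_conjTranspose, Matrix.trace_mul_comm]
  -- combine
  have key : ((A0.adjugate * A').trace).re / A0.det.re = ((A0⁻¹ * A').trace).re := by
    rw [htr_inv, hdetc]
    rw [← Complex.ofReal_inv]
    rw [Complex.re_ofReal_mul]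
    rw [div_eq_inv_mul, Complex.ofReal_re]
  rw [key, hA', Matrix.mul_add, Matrix.trace_add, hz2, Complex.add_re, hz1]
  simp only [Complex.star_def, Complex.conj_re]
  ring

/-- **Gradient of the rate with respect to the `x`-coordinate of the `b`-th movable antenna.**
If `q_b ≠ t_m` for all `m`, then the partial derivative of `R` with respect to the
`x`-coordinate `x_b` of `q_b` exists and equals
`(4πρ/λ) · Im( Σ_m [C₂(q)(m,b) − C₁(q)(m,b)] · ((x_b − x_{t,m})/‖t_m − q_b‖) ·
  exp(i(2π/λ)‖t_m − q_b‖) )`. -/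
theorem hasDerivAt_rate_x_coordinate {N Nt : ℕ}
    (lam ρ σ : ℝ) (hlam : 0 < lam) (hρ : 0 < ρ) (hσ : 0 < σ ^ 2)
    (t : Fin Nt → EuclideanSpace ℝ (Fin 3))
    (q : Fin N → EuclideanSpace ℝ (Fin 3))
    (T1 T2 : Matrix (Fin Nt) (Fin Nt) ℂ)
    (hT1 : T1.IsHermitian) (hT2 : T2.IsHermitian)
    (hT1psd : T1.PosSemidef) (hT2psd : T2.PosSemidef)
    (b : Fin N)
    (hq : ∀ m : Fin Nt, q b ≠ t m) :
    HasDerivAt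
      (fun x : ℝ =>
        nearFieldR lam ρ σ T1 T2 t (Function.update q b (WithLp.toLp 2 (Function.update (q b) 0 x))))
      ((4 * Real.pi * ρ / lam) *
        (∑ m : Fin Nt,
          (nearFieldC lam ρ σ T2 t q m b - nearFieldC lam ρ σ T1 t q m b) *
            ((((q b 0 - t m 0) / ‖t m - q b‖ : ℝ)) : ℂ) *
            Complex.exp (Complex.I * ((2 * Real.pi / lam * ‖t m - q b‖ : ℝ) : ℂ))).im)
      (q b 0) := by
  have hq' : ∀ m, ‖t m - q b‖ ≠ 0 := fun m => by
    rw [norm_ne_zero_iff, sub_ne_zero]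
    exact fun h => hq m h.symm
  have h1 := aux_logdet_hasDerivAt lam ρ σ hσ T1 hT1 hT1psd t q b hq'
  have h2 := aux_logdet_hasDerivAt lam ρ σ hσ T2 hT2 hT2psd t q b hq'
  have h := h1.sub h2
  have hfun : (fun x : ℝ =>
      nearFieldR lam ρ σ T1 T2 t (Function.update q b (WithLp.toLp 2 (Function.update (q b) 0 x))))
      = fun x : ℝ =>
        Real.log ((nearFieldA lam ρ σ T1 t (Function.update q b (updX (q b) x))).det.re)
        - Real.log ((nearFieldA lam ρ σ T2 t (Function.update q b (updX (q b) x))).det.re) :=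
    rfl
  rw [hfun]
  refine h.congr_deriv ?_
  have hHd : ∀ (C : Matrix (Fin Nt) (Fin N) ℂ),
      (∑ m, C m b * auxHd lam ρ t q b b m)
        = Complex.I * (((2 * Real.pi / lam) * ρ : ℝ) : ℂ) *
          ∑ m, C m b * (((q b 0 - t m 0) / ‖t m - q b‖ : ℝ) : ℂ) *
            Complex.exp (Complex.I * ((2 * Real.pi / lam * ‖t m - q b‖ : ℝ) : ℂ)) := by
    intro C
    rw [Finset.mul_sum]
    refine Finset.sum_congr rfl fun m _ => ?_
    simp only [auxHd, Matrix.of_apply, if_pos rfl]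
    push_cast
    ring
  rw [hHd, hHd]
  have hsub : (∑ m : Fin Nt,
      (nearFieldC lam ρ σ T2 t q m b - nearFieldC lam ρ σ T1 t q m b) *
        ((((q b 0 - t m 0) / ‖t m - q b‖ : ℝ)) : ℂ) *
        Complex.exp (Complex.I * ((2 * Real.pi / lam * ‖t m - q b‖ : ℝ) : ℂ)))
      = (∑ m, nearFieldC lam ρ σ T2 t q m b * (((q b 0 - t m 0) / ‖t m - q b‖ : ℝ) : ℂ) *
            Complex.exp (Complex.I * ((2 * Real.pi / lam * ‖t m - q b‖ : ℝ) : ℂ)))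
        - (∑ m, nearFieldC lam ρ σ T1 t q m b * (((q b 0 - t m 0) / ‖t m - q b‖ : ℝ) : ℂ) *
            Complex.exp (Complex.I * ((2 * Real.pi / lam * ‖t m - q b‖ : ℝ) : ℂ))) := by
    rw [← Finset.sum_sub_distrib]
    refine Finset.sum_congr rfl fun m _ => ?_
    ring
  rw [hsub]
  set Z1 := ∑ m, nearFieldC lam ρ σ T1 t q m b * (((q b 0 - t m 0) / ‖t m - q b‖ : ℝ) : ℂ) *
      Complex.exp (Complex.I * ((2 * Real.pi / lam * ‖t m - q b‖ : ℝ) : ℂ)) with hZ1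
  set Z2 := ∑ m, nearFieldC lam ρ σ T2 t q m b * (((q b 0 - t m 0) / ‖t m - q b‖ : ℝ) : ℂ) *
      Complex.exp (Complex.I * ((2 * Real.pi / lam * ‖t m - q b‖ : ℝ) : ℂ)) with hZ2
  simp only [Complex.sub_im, Complex.mul_re, Complex.mul_im, Complex.I_re, Complex.I_im,
    Complex.ofReal_re, Complex.ofReal_im]
  field_simp
  ring
end

section
/- Let X and X̄ be p×q complex matrices and let Y and Ȳ be p×p Hermitian positive definite complex matrices. Then ln det(I_q + X^H Y^{-1} X) ≥ ln det(I_q + X̄^H Ȳ^{-1} X̄) − Tr(X̄^H Ȳ^{-1} X̄) + 2·Re Tr(X̄^H Ȳ^{-1} X) − Re Tr( (Ȳ + X̄X̄^H)^{-1} X̄ X̄^H Ȳ^{-1} (Y + X X^H) ). -/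
open Matrix
open scoped ComplexOrder
open scoped Matrix.Norms.L2Operator MatrixOrder

variable {n : Type*} [Fintype n] [DecidableEq n]

lemma my_trace_eq_sum_eig {A : Matrix n n ℂ} (hA : A.IsHermitian) :
    A.trace = ∑ i, (hA.eigenvalues i : ℂ) := by
  conv_lhs => rw [hA.spectral_theorem]
  rw [Unitary.conjStarAlgAut_apply, Matrix.trace_mul_cycle, Unitary.coe_star_mul_self, Matrix.one_mul,
    Matrix.trace_diagonal]
  rfl

lemma my_one_le_det_one_add {Q : Matrix n n ℂ} (hQ : Q.PosSemidef) :
    (1 : ℂ) ≤ (1 + Q).det := by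
  have hV : (hQ.1.eigenvectorUnitary : Matrix n n ℂ) * (star (hQ.1.eigenvectorUnitary) : Matrix n n ℂ) = 1 :=
    Unitary.coe_mul_star_self _
  have h1 : (1 : Matrix n n ℂ) + Q =
      (hQ.1.eigenvectorUnitary : Matrix n n ℂ) *
        (1 + diagonal (RCLike.ofReal ∘ hQ.1.eigenvalues)) *
        (star (hQ.1.eigenvectorUnitary) : Matrix n n ℂ) := by
    rw [Matrix.mul_add, Matrix.add_mul, Matrix.mul_one, hV]
    congr 1
    exact hQ.1.spectral_theorem
  rw [h1, Matrix.det_mul_right_comm, hV, Matrix.one_mul]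
  have h2 : (1 : Matrix n n ℂ) + diagonal (RCLike.ofReal ∘ hQ.1.eigenvalues) =
      diagonal (fun i => ((1 + hQ.1.eigenvalues i : ℝ) : ℂ)) := by
    rw [← Matrix.diagonal_one, Matrix.diagonal_add]
    congr 1
    ext i
    simp
  rw [h2, Matrix.det_diagonal]
  have : ∏ i, ((1 + hQ.1.eigenvalues i : ℝ) : ℂ) = ((∏ i, (1 + hQ.1.eigenvalues i) : ℝ) : ℂ) := by
    push_cast; ring
  rw [this]
  have h3 : (1 : ℝ) ≤ ∏ i, (1 + hQ.1.eigenvalues i) := by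
    calc (1:ℝ) = ∏ _i : n, (1:ℝ) := by simp
      _ ≤ _ := Finset.prod_le_prod (by intro i _; norm_num)
          (fun i _ => by linarith [hQ.eigenvalues_nonneg i])
  calc (1 : ℂ) = ((1 : ℝ) : ℂ) := by norm_num
    _ ≤ _ := by exact_mod_cast h3




lemma my_sqrt_det_ne {A : Matrix n n ℂ} (hA : A.PosDef) :
    (CFC.sqrt A).det ≠ 0 := by
  intro h
  have hd : A.det = (CFC.sqrt A).det * (CFC.sqrt A).det := by
    rw [← Matrix.det_mul, CFC.sqrt_mul_sqrt_self A hA.posSemidef.nonneg]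
  exact hA.det_pos.ne' (by rw [hd, h, mul_zero])

lemma my_det_le_det_add {A P : Matrix n n ℂ} (hA : A.PosDef) (hP : P.PosSemidef) :
    A.det ≤ (A + P).det := by
  set S := CFC.sqrt A with hSdef
  have hSS : S * S = A := CFC.sqrt_mul_sqrt_self A hA.posSemidef.nonneg
  have hdS : S.det ≠ 0 := my_sqrt_det_ne hA
  have hSH : Sᴴ = S := (CFC.sqrt_nonneg A).posSemidef.isHermitian
  have hSinvH : (S⁻¹)ᴴ = S⁻¹ := by rw [Matrix.conjTranspose_nonsing_inv, hSH]
  have hQ : (S⁻¹ * P * S⁻¹).PosSemidef := by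
    have := hP.mul_mul_conjTranspose_same S⁻¹
    rwa [hSinvH] at this
  have hkey : S * (1 + S⁻¹ * P * S⁻¹) * S = A + P := by
    rw [Matrix.mul_add, Matrix.add_mul, Matrix.mul_one, hSS]
    congr 1
    have h1 : S * (S⁻¹ * P * S⁻¹) * S = S * S⁻¹ * P * (S⁻¹ * S) := by
      simp only [Matrix.mul_assoc]
    rw [h1, Matrix.mul_nonsing_inv _ hdS.isUnit, Matrix.nonsing_inv_mul _ hdS.isUnit,
      Matrix.one_mul, Matrix.mul_one]
  calc A.det = A.det * 1 := (mul_one _).symm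
    _ ≤ A.det * (1 + S⁻¹ * P * S⁻¹).det :=
        mul_le_mul_of_nonneg_left (my_one_le_det_one_add hQ) hA.det_pos.le
    _ = (A + P).det := by
        rw [← hkey, Matrix.det_mul, Matrix.det_mul, ← hSS, Matrix.det_mul]; ring

lemma my_posDef_conj {S E : Matrix n n ℂ} (hE : E.PosDef) (hSH : Sᴴ = S)
    (hdS : S.det ≠ 0) : (S * E * S).PosDef := by
  refine Matrix.PosDef.of_dotProduct_mulVec_pos ?_ ?_
  · show (S * E * S)ᴴ = S * E * S
    rw [Matrix.conjTranspose_mul, Matrix.conjTranspose_mul, hSH, hE.isHermitian.eq,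
      Matrix.mul_assoc]
  · intro x hx
    have hinj : Function.Injective S.mulVec :=
      Matrix.mulVec_injective_iff_isUnit.mpr ((Matrix.isUnit_iff_isUnit_det S).mpr hdS.isUnit)
    have hy : S *ᵥ x ≠ 0 := by
      intro h
      exact hx (hinj (by rw [h, Matrix.mulVec_zero]))
    have hcalc : dotProduct (star x) ((S * E * S) *ᵥ x)
        = dotProduct (star (S *ᵥ x)) (E *ᵥ (S *ᵥ x)) := by
      rw [← Matrix.mulVec_mulVec, ← Matrix.mulVec_mulVec, Matrix.dotProduct_mulVec (star x) S,
        Matrix.star_mulVec, hSH]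
    rw [hcalc]
    exact hE.dotProduct_mulVec_pos hy

lemma my_log_det_le_trace {M : Matrix n n ℂ} (hM : M.PosDef) :
    Real.log M.det.re ≤ M.trace.re - Fintype.card n := by
  have hdet : M.det.re = ∏ i, hM.1.eigenvalues i := by
    rw [hM.1.det_eq_prod_eigenvalues]
    norm_cast
  have htr : M.trace.re = ∑ i, hM.1.eigenvalues i := by
    rw [my_trace_eq_sum_eig hM.1]
    norm_cast
  rw [hdet, htr, Real.log_prod (fun i _ => (hM.eigenvalues_pos i).ne')]
  calc ∑ i, Real.log (hM.1.eigenvalues i)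
      ≤ ∑ i, (hM.1.eigenvalues i - 1) :=
        Finset.sum_le_sum fun i _ => Real.log_le_sub_one_of_pos (hM.eigenvalues_pos i)
    _ = ∑ i, hM.1.eigenvalues i - Fintype.card n := by
        rw [Finset.sum_sub_distrib, Finset.sum_const, Finset.card_univ, nsmul_eq_mul, mul_one]

section Aux
variable {m n : Type*} [Fintype n] [DecidableEq n] [Fintype m] [DecidableEq m]

lemma my_key (X : Matrix n m ℂ) {Y : Matrix n n ℂ} (hY : Y.PosDef) :
    (1 + Xᴴ * Y⁻¹ * X) * (Xᴴ * (Y + X * Xᴴ)⁻¹) = Xᴴ * Y⁻¹ := by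
  have hT : (Y + X * Xᴴ).PosDef := hY.add_posSemidef (posSemidef_self_mul_conjTranspose X)
  have hYd : IsUnit Y.det := (Matrix.isUnit_iff_isUnit_det Y).mp hY.isUnit
  have hTd : IsUnit (Y + X * Xᴴ).det := (Matrix.isUnit_iff_isUnit_det _).mp hT.isUnit
  have h1 : (1 + Xᴴ * Y⁻¹ * X) * Xᴴ = Xᴴ * Y⁻¹ * (Y + X * Xᴴ) := by
    simp only [Matrix.add_mul, Matrix.mul_add, Matrix.one_mul, Matrix.mul_assoc,
      Matrix.nonsing_inv_mul_cancel_left _ _ hYd, Matrix.nonsing_inv_mul _ hYd, Matrix.mul_one]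
  calc (1 + Xᴴ * Y⁻¹ * X) * (Xᴴ * (Y + X * Xᴴ)⁻¹)
      = ((1 + Xᴴ * Y⁻¹ * X) * Xᴴ) * (Y + X * Xᴴ)⁻¹ := (Matrix.mul_assoc _ _ _).symm
    _ = Xᴴ * Y⁻¹ := by rw [h1, Matrix.mul_nonsing_inv_cancel_right _ _ hTd]
end Aux


lemma my_cdet {n : Type*} [Fintype n] [DecidableEq n] {A : Matrix n n ℂ} (hA : A.PosDef) :
    A.det = (A.det.re : ℂ) ∧ 0 < A.det.re := by
  have h := hA.det_pos
  rw [Complex.lt_def] at h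
  refine ⟨Complex.ext rfl ?_, by simpa using h.1⟩
  simp [← h.2]

/-- **Matrix log-det lower bound (SCA surrogate).**
For arbitrary `p × q` complex matrices `X`, `X̄` and Hermitian positive definite
`p × p` complex matrices `Y`, `Ȳ`:
`ln det(I + Xᴴ Y⁻¹ X) ≥ ln det(I + X̄ᴴ Ȳ⁻¹ X̄) − Tr(X̄ᴴ Ȳ⁻¹ X̄) + 2 Re Tr(X̄ᴴ Ȳ⁻¹ X)
   − Re Tr((Ȳ + X̄X̄ᴴ)⁻¹ X̄X̄ᴴ Ȳ⁻¹ (Y + XXᴴ))`. -/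
theorem lndet_sca_lower_bound {p q : ℕ}
    (X Xb : Matrix (Fin p) (Fin q) ℂ)
    (Y Yb : Matrix (Fin p) (Fin p) ℂ)
    (hY : Y.PosDef) (hYb : Yb.PosDef) :
    Real.log ((1 + Xᴴ * Y⁻¹ * X).det.re) ≥
      Real.log ((1 + Xbᴴ * Yb⁻¹ * Xb).det.re)
        - ((Xbᴴ * Yb⁻¹ * Xb).trace).re
        + 2 * ((Xbᴴ * Yb⁻¹ * X).trace).re
        - (((Yb + Xb * Xbᴴ)⁻¹ * (Xb * Xbᴴ) * Yb⁻¹ * (Y + X * Xᴴ)).trace).re := by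
  classical
  set T : Matrix (Fin p) (Fin p) ℂ := Y + X * Xᴴ with hTdef
  set Tb : Matrix (Fin p) (Fin p) ℂ := Yb + Xb * Xbᴴ with hTbdef
  set A : Matrix (Fin q) (Fin q) ℂ := 1 + Xᴴ * Y⁻¹ * X with hAdef
  set Ab : Matrix (Fin q) (Fin q) ℂ := 1 + Xbᴴ * Yb⁻¹ * Xb with hAbdef
  have hT : T.PosDef := hY.add_posSemidef (posSemidef_self_mul_conjTranspose X)
  have hTb : Tb.PosDef := hYb.add_posSemidef (posSemidef_self_mul_conjTranspose Xb)
  have hA : A.PosDef :=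
    Matrix.PosDef.one.add_posSemidef ((hY.inv.posSemidef).conjTranspose_mul_mul_same X)
  have hAb : Ab.PosDef :=
    Matrix.PosDef.one.add_posSemidef ((hYb.inv.posSemidef).conjTranspose_mul_mul_same Xb)
  have hTd : IsUnit T.det := (Matrix.isUnit_iff_isUnit_det T).mp hT.isUnit
  have hTbd : IsUnit Tb.det := (Matrix.isUnit_iff_isUnit_det Tb).mp hTb.isUnit
  set U : Matrix (Fin p) (Fin q) ℂ := Tb⁻¹ * Xb with hUdef
  have hUH : Uᴴ = Xbᴴ * Tb⁻¹ := by
    rw [hUdef, Matrix.conjTranspose_mul, Matrix.conjTranspose_nonsing_inv, hTb.isHermitian.eq]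
  have hK2 : Ab * Uᴴ = Xbᴴ * Yb⁻¹ := by
    rw [hUH, hAbdef, hTbdef]; exact my_key Xb hYb
  have hK1 : A⁻¹ = 1 - Xᴴ * (T⁻¹ * X) := by
    apply Matrix.inv_eq_right_inv
    calc A * (1 - Xᴴ * (T⁻¹ * X))
        = A - (A * (Xᴴ * T⁻¹)) * X := by
          rw [Matrix.mul_sub, Matrix.mul_one]; congr 1; simp only [Matrix.mul_assoc]
      _ = A - Xᴴ * Y⁻¹ * X := by rw [hAdef, hTdef, my_key X hY]
      _ = 1 := by rw [hAdef]; exact add_sub_cancel_right 1 _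
  set W : Matrix (Fin p) (Fin q) ℂ := U - T⁻¹ * X with hWdef
  set E : Matrix (Fin q) (Fin q) ℂ := 1 - Uᴴ * X - Xᴴ * U + Uᴴ * T * U with hEdef
  have hWH : Wᴴ = Uᴴ - Xᴴ * T⁻¹ := by
    rw [hWdef, Matrix.conjTranspose_sub]
    congr 1
    rw [Matrix.conjTranspose_mul, Matrix.conjTranspose_nonsing_inv, hT.isHermitian.eq]
  have hK3 : E = A⁻¹ + Wᴴ * T * W := by
    rw [hK1, hWH, hWdef, hEdef]
    simp only [Matrix.sub_mul, Matrix.mul_sub, Matrix.mul_assoc,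
      Matrix.mul_nonsing_inv_cancel_left _ _ hTd, Matrix.nonsing_inv_mul_cancel_left _ _ hTd]
    abel
  have hP : (Wᴴ * T * W).PosSemidef := hT.posSemidef.conjTranspose_mul_mul_same W
  have hE : E.PosDef := by rw [hK3]; exact hA.inv.add_posSemidef hP
  have hdetle : (A⁻¹).det ≤ E.det := by rw [hK3]; exact my_det_le_det_add hA.inv hP
  -- step 3
  set S : Matrix (Fin q) (Fin q) ℂ := CFC.sqrt Ab with hSdef
  have hSS : S * S = Ab := CFC.sqrt_mul_sqrt_self Ab hAb.posSemidef.nonneg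
  have hSd : S.det ≠ 0 := my_sqrt_det_ne hAb
  have hM : (S * E * S).PosDef :=
    my_posDef_conj hE (CFC.sqrt_nonneg Ab).posSemidef.isHermitian hSd
  have hlog := my_log_det_le_trace hM
  have hdetM : (S * E * S).det = Ab.det * E.det := by
    rw [Matrix.det_mul, Matrix.det_mul, ← hSS, Matrix.det_mul]; ring
  have htrM : (S * E * S).trace = (Ab * E).trace := by
    rw [Matrix.trace_mul_cycle, hSS]
  -- step 4 : trace identities
  have ht2 : (Ab * (Uᴴ * X)).trace = (Xbᴴ * Yb⁻¹ * X).trace := by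
    rw [← Matrix.mul_assoc, hK2]
  have ht3 : (Ab * (Xᴴ * U)).trace = star ((Xbᴴ * Yb⁻¹ * X).trace) := by
    have e1 : (Ab * (Xᴴ * U))ᴴ = Uᴴ * X * Ab := by
      rw [Matrix.conjTranspose_mul, Matrix.conjTranspose_mul,
        Matrix.conjTranspose_conjTranspose, hAb.isHermitian.eq]
    calc (Ab * (Xᴴ * U)).trace = star ((Ab * (Xᴴ * U))ᴴ.trace) := by
          rw [Matrix.trace_conjTranspose, star_star]
      _ = star ((Uᴴ * X * Ab).trace) := by rw [e1]
      _ = star ((Ab * (Uᴴ * X)).trace) := by rw [Matrix.trace_mul_comm (Uᴴ * X) Ab]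
      _ = star ((Xbᴴ * Yb⁻¹ * X).trace) := by rw [ht2]
  have ht4 : (Ab * (Uᴴ * T * U)).trace = (Tb⁻¹ * (Xb * Xbᴴ) * Yb⁻¹ * T).trace := by
    have e2 : Ab * (Uᴴ * T * U) = (Xbᴴ * Yb⁻¹ * T) * U := by
      calc Ab * (Uᴴ * T * U) = (Ab * Uᴴ) * (T * U) := by simp only [Matrix.mul_assoc]
        _ = (Xbᴴ * Yb⁻¹ * T) * U := by rw [hK2]; simp only [Matrix.mul_assoc]
    have e3 : Tb⁻¹ * (Xb * Xbᴴ) * Yb⁻¹ * T = U * (Xbᴴ * Yb⁻¹ * T) := by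
      rw [hUdef]; simp only [Matrix.mul_assoc]
    rw [e2, e3, Matrix.trace_mul_comm]
  have ht1 : Ab.trace = (q : ℂ) + (Xbᴴ * Yb⁻¹ * Xb).trace := by
    rw [hAbdef, Matrix.trace_add, Matrix.trace_one]
    norm_num
  have htrAbE : (Ab * E).trace = Ab.trace - (Xbᴴ * Yb⁻¹ * X).trace
      - star ((Xbᴴ * Yb⁻¹ * X).trace) + (Tb⁻¹ * (Xb * Xbᴴ) * Yb⁻¹ * T).trace := by
    rw [hEdef, Matrix.mul_add, Matrix.mul_sub, Matrix.mul_sub, Matrix.mul_one,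
      Matrix.trace_add, Matrix.trace_sub, Matrix.trace_sub, ht2, ht3, ht4]
  -- endgame over ℝ
  obtain ⟨hAeq, hApos⟩ := my_cdet hA
  obtain ⟨hEeq, hEpos⟩ := my_cdet hE
  obtain ⟨hAbeq, hAbpos⟩ := my_cdet hAb
  have hAinvdet : (A⁻¹).det = (((A.det.re)⁻¹ : ℝ) : ℂ) := by
    rw [Matrix.det_nonsing_inv, Ring.inverse_eq_inv']
    conv_lhs => rw [hAeq]
    exact (Complex.ofReal_inv _).symm
  have h1 : (A.det.re)⁻¹ ≤ E.det.re := by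
    have h := hdetle
    rw [hAinvdet, hEeq, Complex.real_le_real] at h
    exact h
  have hloga : - Real.log E.det.re ≤ Real.log A.det.re := by
    have h0 : Real.log ((A.det.re)⁻¹) ≤ Real.log E.det.re :=
      Real.log_le_log (by positivity) h1
    rw [Real.log_inv] at h0; linarith
  have hlog2 : Real.log (Ab.det.re) + Real.log (E.det.re) ≤ (Ab * E).trace.re - q := by
    have h := hlog
    rw [hdetM, htrM, hAbeq, hEeq] at h
    have hre : ((((Ab.det.re) : ℂ)) * ((E.det.re : ℂ))).re = Ab.det.re * E.det.re := by
      push_cast; simp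
    rw [hre, Real.log_mul hAbpos.ne' hEpos.ne'] at h
    simpa using h
  have hretr : (Ab * E).trace.re = q + (Xbᴴ * Yb⁻¹ * Xb).trace.re
      - 2 * (Xbᴴ * Yb⁻¹ * X).trace.re + (Tb⁻¹ * (Xb * Xbᴴ) * Yb⁻¹ * T).trace.re := by
    rw [htrAbE, ht1]
    simp [Complex.add_re, Complex.sub_re, Complex.conj_re]
    ring
  rw [ge_iff_le]
  linarith
end

section
/- Let B₀ be an n×n Hermitian positive definite complex matrix, H an n×m complex matrix, and V, V₀ m×m Hermitian positive semidefinite complex matrices. Then ln det(B₀ + H V H^H) ≤ ln det(B₀ + H V₀ H^H) + Re Tr( H^H (B₀ + H V₀ H^H)^{-1} H (V − V₀) ). -/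
open Matrix
open scoped ComplexOrder
open scoped MatrixOrder

/-- Auxiliary: for a positive semidefinite complex matrix `Q` with nonzero determinant,
`log (det Q).re ≤ (trace Q).re - k`. -/
lemma logdet_le_trace_sub_card {k : ℕ} {Q : Matrix (Fin k) (Fin k) ℂ}
    (hQ : Q.PosSemidef) (hd : Q.det ≠ 0) :
    Real.log Q.det.re ≤ Q.trace.re - k := by
  set lam := hQ.1.eigenvalues with hlam
  have hdet : Q.det = ∏ i, (lam i : ℂ) := hQ.1.det_eq_prod_eigenvalues
  have hdre : Q.det.re = ∏ i, lam i := by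
    rw [hdet, ← Complex.ofReal_prod, Complex.ofReal_re]
  have htr : Q.trace = ∑ i, (lam i : ℂ) := by
    exact hQ.1.trace_eq_sum_eigenvalues
  have htrre : Q.trace.re = ∑ i, lam i := by
    rw [htr, ← Complex.ofReal_sum, Complex.ofReal_re]
  have hpos : ∀ i, 0 < lam i := by
    intro i
    refine lt_of_le_of_ne (hQ.eigenvalues_nonneg i) (Ne.symm ?_)
    intro h
    apply hd
    rw [hdet]
    exact Finset.prod_eq_zero (Finset.mem_univ i) (by simp [h])
  rw [hdre, htrre]
  rw [Real.log_prod (fun i _ => (hpos i).ne')]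
  calc ∑ i, Real.log (lam i) ≤ ∑ i, (lam i - 1) :=
        Finset.sum_le_sum fun i _ => Real.log_le_sub_one_of_pos (hpos i)
    _ = (∑ i, lam i) - k := by
        rw [Finset.sum_sub_distrib]
        simp

/-- **First-order Taylor upper bound on the log-det function.**
Let `B₀` be an `n × n` Hermitian positive definite complex matrix, `H` an `n × m` complex
matrix, and `V`, `V₀` be `m × m` Hermitian positive semidefinite complex matrices. Then
`ln det(B₀ + H V Hᴴ) ≤ ln det(B₀ + H V₀ Hᴴ) + Re Tr(Hᴴ (B₀ + H V₀ Hᴴ)⁻¹ H (V − V₀))`. -/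
theorem lndet_first_order_upper_bound {n m : ℕ}
    (B0 : Matrix (Fin n) (Fin n) ℂ) (hB0 : B0.PosDef)
    (H : Matrix (Fin n) (Fin m) ℂ)
    (V V0 : Matrix (Fin m) (Fin m) ℂ)
    (hV : V.PosSemidef) (hV0 : V0.PosSemidef) :
    Real.log ((B0 + H * V * Hᴴ).det.re) ≤
      Real.log ((B0 + H * V0 * Hᴴ).det.re)
        + ((Hᴴ * (B0 + H * V0 * Hᴴ)⁻¹ * H * (V - V0)).trace).re := by
  set A := B0 + H * V * Hᴴ with hAdef
  set A0 := B0 + H * V0 * Hᴴ with hA0def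
  have hA : A.PosDef := hB0.add_posSemidef (hV.mul_mul_conjTranspose_same H)
  have hA0 : A0.PosDef := hB0.add_posSemidef (hV0.mul_mul_conjTranspose_same H)
  -- square root of A0
  set S := CFC.sqrt A0 with hSdef
  have hS : S.PosSemidef := (CFC.sqrt_nonneg A0).posSemidef
  have hSS : S * S = A0 := CFC.sqrt_mul_sqrt_self A0 hA0.posSemidef.nonneg
  have hA0det : (0 : ℂ) < A0.det := hA0.det_pos
  have hAdet : (0 : ℂ) < A.det := hA.det_pos
  have hSdet : S.det ≠ 0 := by
    intro h
    have : A0.det = 0 := by rw [← hSS, det_mul, h, mul_zero]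
    exact hA0det.ne' this
  have hSinv : (S⁻¹)ᴴ = S⁻¹ := hS.1.inv
  -- P = S⁻¹ A S⁻¹
  set P := S⁻¹ * A * S⁻¹ with hPdef
  have hPsd : P.PosSemidef := by
    have := hA.posSemidef.mul_mul_conjTranspose_same S⁻¹
    rwa [hSinv] at this
  -- A0⁻¹ = S⁻¹ * S⁻¹
  have hA0inv : A0⁻¹ = S⁻¹ * S⁻¹ := by rw [← hSS, Matrix.mul_inv_rev]
  -- determinant relation
  have hdetP : A.det = A0.det * P.det := by
    have hSinvdet : (S⁻¹).det = S.det⁻¹ := by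
      rw [Matrix.det_nonsing_inv, Ring.inverse_eq_inv]
    have hA0d : A0.det = S.det * S.det := by rw [← hSS, det_mul]
    rw [hPdef, det_mul, det_mul, hSinvdet, hA0d]
    field_simp
  have hPdetne : P.det ≠ 0 := by
    intro h
    rw [h, mul_zero] at hdetP
    exact hAdet.ne' hdetP
  -- trace relation: trace of RHS = trace P - n
  have hA0IsUnit : IsUnit A0.det := hA0det.ne'.isUnit
  have hdiff : H * (V - V0) * Hᴴ = A - A0 := by
    rw [hAdef, hA0def]
    rw [Matrix.mul_sub, Matrix.sub_mul]
    abel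
  have htrace : (Hᴴ * A0⁻¹ * H * (V - V0)).trace = P.trace - (n : ℂ) := by
    have h1 : Hᴴ * A0⁻¹ * H * (V - V0) = Hᴴ * (A0⁻¹ * H * (V - V0)) := by
      simp only [Matrix.mul_assoc]
    have h2 : (A0⁻¹ * H * (V - V0)) * Hᴴ = A0⁻¹ * (H * (V - V0) * Hᴴ) := by
      simp only [Matrix.mul_assoc]
    rw [h1, Matrix.trace_mul_comm, h2, hdiff, Matrix.mul_sub,
      Matrix.nonsing_inv_mul A0 hA0IsUnit, trace_sub, trace_one]
    congr 1
    · -- trace (A0⁻¹ * A) = trace P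
      rw [hA0inv, hPdef, Matrix.trace_mul_comm (S⁻¹ * A) S⁻¹, ← mul_assoc]
    · simp
  -- real parts of determinants
  have hA0re : (0 : ℝ) < A0.det.re := (Complex.lt_def.mp hA0det).1
  have hA0im : A0.det.im = 0 := ((Complex.lt_def.mp hA0det).2).symm
  have hAre : (0 : ℝ) < A.det.re := (Complex.lt_def.mp hAdet).1
  have hAim : A.det.im = 0 := ((Complex.lt_def.mp hAdet).2).symm
  have hA0c : A0.det = (A0.det.re : ℂ) := Complex.ext rfl hA0im
  have hAc : A.det = (A.det.re : ℂ) := Complex.ext rfl hAim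
  have hPc : P.det = ((A.det.re / A0.det.re : ℝ) : ℂ) := by
    have h := hdetP
    rw [hAc, hA0c] at h
    rw [Complex.ofReal_div]
    field_simp [hA0re.ne'] at h ⊢
    rw [h]
  have hPre : P.det.re = A.det.re / A0.det.re := by rw [hPc, Complex.ofReal_re]
  -- apply the auxiliary lemma
  have key := logdet_le_trace_sub_card hPsd hPdetne
  rw [hPre] at key
  have hlog : Real.log (A.det.re / A0.det.re) =
      Real.log A.det.re - Real.log A0.det.re :=
    Real.log_div hAre.ne' hA0re.ne'
  rw [hlog] at key
  have htrre : ((Hᴴ * A0⁻¹ * H * (V - V0)).trace).re = P.trace.re - n := by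
    rw [htrace]
    simp
  rw [htrre]
  linarith
end
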